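/- arXiv:2511.17034 — 2 statements merged into one kernel-verified Lean document; each statement's English description precedes it below -/
import Mathlib

section
/- Let n and k be positive integers and K a nonzero integer, and work in the Laurent polynomial ring ℤ[u^{±1}, v^{±1}, x_1^{±1},…,x_n^{±1}]. Then: (a) 2 · Σ_{y∈ℤ^k} det_{1≤i,j≤k}( u^{y_i} v^{K y_i^2 − (2j−1) y_i} ( ė_{n−i+j−K y_i}(x) + ė_{n+i+j−K y_i−1}(x) ) ) = Σ_{y∈ℤ^k} det_{1≤i,j≤k}( u^{y_i} v^{K y_i^2 − (2j−1) y_i} ( ë_{n−i+j−K y_i+1}(x) + ë_{n+i+j−K y_i−1}(x) ) ); and (b) Σ_{y∈ℤ^k} det_{1≤i,j≤k}( u^{y_i} v^{K y_i^2 − 2j y_i} ( ė_{n−i+j−K y_i}(x) − ė_{n+i+j−K y_i}(x) ) ) = Σ_{y∈ℤ^k} det_{1≤i,j≤k}( u^{y_i} v^{K y_i^2 − 2j y_i} ( ë_{n−i+j−K y_i+1}(x) − ë_{n+i+j−K y_i}(x) ) ). In all four sums only finitely many y ∈ ℤ^k give a nonzero determinant (since ė_m(x) = 0 and ë_m(x)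 = 0 unless 0 ≤ m ≤ 2n+1 and K ≠ 0), so all sums are finite. (These are the identities of the paper with t^{1/2} replaced by v and t = v^2.) -/
open Finset

noncomputable def esymI {F : Type*} [CommRing F] (s : Multiset F) (r : ℤ) : F :=
  if r < 0 then 0 else ((Multiset.powersetCard r.toNat s).map Multiset.prod).sum

noncomputable def eSym {F : Type*} [CommRing F] {n : ℕ} (x : Fin n → F) (r : ℤ) : F :=
  esymI (Finset.univ.val.map x) r

noncomputable def eDot {F : Type*} [Field F] {n : ℕ} (x : Fin n → F) (r : ℤ) : F :=
  esymI (Finset.univ.val.map x + Finset.univ.val.map fun i => (x i)⁻¹) r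

noncomputable def eDDot {F : Type*} [Field F] {n : ℕ} (x : Fin n → F) (r : ℤ) : F :=
  esymI (Finset.univ.val.map x + Finset.univ.val.map (fun i => (x i)⁻¹) + {1}) r

def multPart (n : ℕ) (lam : ℕ → ℕ) (i : ℕ) : ℕ :=
  ((Finset.range n).filter fun j => lam j = i).card

noncomputable def vHL {F : Type*} [Field F] (n : ℕ) (t : F) (lam : ℕ → ℕ) : F :=
  ∏ i ∈ (Finset.range n).image lam,
    ∏ j ∈ Finset.range (multPart n lam i), (1 - t ^ (j + 1)) / (1 - t)

open scoped Classical in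
noncomputable def HLP {F : Type*} [Field F] (n : ℕ) (x : Fin n → F) (t : F) (lam : ℕ → ℕ) : F :=
  if ∀ i, n ≤ i → lam i = 0 then
    (vHL n t lam)⁻¹ *
      ∑ w : Equiv.Perm (Fin n),
        (∏ i : Fin n, x (w i) ^ lam i.val) *
          ∏ p ∈ Finset.univ.filter fun p : Fin n × Fin n => p.1 < p.2,
            (x (w p.1) - t * x (w p.2)) / (x (w p.1) - x (w p.2))
  else 0

def pad {n B : ℕ} (f : Fin n → Fin B) : ℕ → ℕ :=
  fun i => if h : i < n then (f ⟨i, h⟩ : ℕ) else 0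

def zchoose2 (y : ℤ) : ℤ := y * (y - 1) / 2

abbrev FQ (σ : Type*) : Type _ := FractionRing (MvPolynomial σ ℚ)

noncomputable def XX {σ : Type*} (s : σ) : FQ σ :=
  algebraMap (MvPolynomial σ ℚ) (FractionRing (MvPolynomial σ ℚ)) (MvPolynomial.X s)

noncomputable def qPoch (a p : ℂ) : ℂ := ∏' j : ℕ, (1 - a * p ^ j)

noncomputable def theta (a p : ℂ) : ℂ := qPoch a p * qPoch (p / a) p

def gbinom {F : Type*} [CommRing F] (t : F) : ℕ → ℕ → F
  | _, 0 => 1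
  | 0, _ + 1 => 0
  | m + 1, r + 1 => gbinom t m (r + 1) + t ^ (m - r) * gbinom t m r

noncomputable def gbinomZ {F : Type*} [CommRing F] (t : F) (m : ℕ) (r : ℤ) : F :=
  if r < 0 then 0 else gbinom t m r.toNat

def lodd {n B : ℕ} (f : Fin n → Fin B) : ℕ :=
  (Finset.univ.filter fun i : Fin n => Odd (f i : ℕ)).card


lemma esymI_of_neg {F : Type*} [CommRing F] (s : Multiset F) {r : ℤ} (h : r < 0) :
    esymI s r = 0 := by simp [esymI, h]

lemma esymI_of_gt {F : Type*} [CommRing F] (s : Multiset F) {r : ℤ}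
    (h : (Multiset.card s : ℤ) < r) : esymI s r = 0 := by
  rw [esymI, if_neg (by omega), Multiset.powersetCard_eq_empty _ (by omega)]
  simp

lemma esymI_zero {F : Type*} [CommRing F] (s : Multiset F) : esymI s 0 = 1 := by
  simp [esymI]

lemma esymI_cons {F : Type*} [CommRing F] (a : F) (s : Multiset F) (r : ℤ) :
    esymI (a ::ₘ s) r = esymI s r + a * esymI s (r - 1) := by
  rcases lt_trichotomy r 0 with h | h | h
  · rw [esymI_of_neg _ h, esymI_of_neg _ h, esymI_of_neg _ (by omega), mul_zero, add_zero]
  · subst h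
    rw [esymI_zero, esymI_zero, esymI_of_neg _ (by omega), mul_zero, add_zero]
  · rw [esymI, esymI, esymI, if_neg (by omega), if_neg (by omega), if_neg (by omega)]
    rw [show r.toNat = (r-1).toNat + 1 by omega, Multiset.powersetCard_cons]
    simp [Multiset.sum_map_mul_left, Function.comp_def, Multiset.prod_cons]

lemma eDDot_eq {F : Type*} [Field F] {n : ℕ} (x : Fin n → F) (r : ℤ) :
    eDDot x r = eDot x r + eDot x (r - 1) := by
  rw [eDDot, eDot, eDot, show (Finset.univ.val.map x + Finset.univ.val.map (fun i => (x i)⁻¹)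
      + ({1} : Multiset F)) = (1 : F) ::ₘ (Finset.univ.val.map x +
      Finset.univ.val.map fun i => (x i)⁻¹) by rw [add_comm, Multiset.singleton_add],
    esymI_cons, one_mul]

lemma eDot_eq_zero {F : Type*} [Field F] {n : ℕ} (x : Fin n → F) {r : ℤ}
    (h : r < 0 ∨ 2 * n < r) : eDot x r = 0 := by
  rcases h with h | h
  · exact esymI_of_neg _ h
  · refine esymI_of_gt _ ?_
    rw [Multiset.card_add, Multiset.card_map, Multiset.card_map]
    simp only [Finset.card_val, Finset.card_univ, Fintype.card_fin]
    omega

lemma finsum_det_eq_det_sum {F : Type*} [Field F] {k : ℕ}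
    (h : Fin k → ℤ → (Fin k → F)) (A : Finset ℤ)
    (hh : ∀ i t, t ∉ A → h i t = 0) :
    ∑ᶠ y : Fin k → ℤ, Matrix.det (Matrix.of fun i j => h i (y i) j)
      = Matrix.det (Matrix.of fun i j => ∑ t ∈ A, h i t j) := by
  classical
  rw [finsum_eq_sum_of_support_subset _
    (s := Fintype.piFinset fun _ : Fin k => A) ?_]
  · have key := (Matrix.detRowAlternating :
        (Fin k → F) [⋀^Fin k]→ₗ[F] F).toMultilinearMap.map_sum_finset
        (fun i t => h i t) (fun _ => A)
    convert key.symm using 2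
    · rfl
    · rw [show (Matrix.of fun i j => ∑ t ∈ A, h i t j) = fun i => ∑ j ∈ A, h i j by
        ext i j; simp [Finset.sum_apply]]
      rfl
  · intro y hy
    simp only [Function.mem_support, ne_eq] at hy
    by_contra hmem
    apply hy
    simp only [Finset.mem_coe, Fintype.mem_piFinset] at hmem
    push_neg at hmem
    obtain ⟨i, hi⟩ := hmem
    refine Matrix.det_eq_zero_of_row_eq_zero i fun j => ?_
    rw [Matrix.of_apply, hh i (y i) hi]
    rfl

lemma finsum_det_rel {F : Type*} [Field F] {k : ℕ}
    (g g' : Fin k → ℤ → (Fin k → F)) (L : Matrix (Fin k) (Fin k) F)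
    (A : Finset ℤ)
    (hsupp : ∀ i t, t ∉ A → g i t = 0)
    (hrel : ∀ i t, g' i t = ∑ i', L i i' • g i' t) :
    ∑ᶠ y : Fin k → ℤ, Matrix.det (Matrix.of fun i j => g' i (y i) j)
      = L.det * ∑ᶠ y : Fin k → ℤ, Matrix.det (Matrix.of fun i j => g i (y i) j) := by
  classical
  have hsupp' : ∀ i t, t ∉ A → g' i t = 0 := by
    intro i t ht
    rw [hrel]
    simp only [hsupp _ _ ht]
    simp
  rw [finsum_det_eq_det_sum g' A hsupp', finsum_det_eq_det_sum g A hsupp, ← Matrix.det_mul]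
  congr 1
  ext i j
  simp only [Matrix.mul_apply, Matrix.of_apply, hrel, Finset.sum_apply, Pi.smul_apply,
    smul_eq_mul]
  rw [Finset.sum_comm]
  simp [Finset.mul_sum]

open Finset

section Lmat
variable {F : Type*} [Field F]

def Lmat (k : ℕ) (d : Fin k → F) : Matrix (Fin k) (Fin k) F :=
  Matrix.of fun i i' =>
    (if i' = i then d i else 0) + (if (i' : ℕ) + 1 = (i : ℕ) then 1 else 0)

lemma Lmat_det (k : ℕ) (d : Fin k → F) : (Lmat k d).det = ∏ i, d i := by
  rw [Matrix.det_of_lowerTriangular]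
  · refine Finset.prod_congr rfl fun i _ => ?_
    simp [Lmat]
  · intro i i' hlt
    have h : (i : ℕ) < (i' : ℕ) := hlt
    simp only [Lmat, Matrix.of_apply]
    rw [if_neg (by omega : ¬ (i' : ℕ) + 1 = (i : ℕ)), if_neg (fun hc => by
      subst hc; omega)]
    simp

lemma Lmat_sum {M : Type*} [AddCommMonoid M] [Module F M] (k : ℕ) (d : Fin k → F)
    (w : Fin k → M) (i : Fin k) :
    ∑ i', Lmat k d i i' • w i' =
      d i • w i + (if h : 0 < (i : ℕ) then w ⟨(i : ℕ) - 1, by omega⟩ else 0) := by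
  simp only [Lmat, Matrix.of_apply, add_smul, ite_smul, zero_smul, one_smul,
    Finset.sum_add_distrib]
  congr 1
  · rw [Finset.sum_ite_eq' univ i (fun i' => d i • w i')]
    simp
  · rcases i with ⟨iv, hiv⟩
    cases iv with
    | zero =>
      rw [dif_neg (by simp)]
      refine Finset.sum_eq_zero fun i' _ => ?_
      rw [if_neg (by simp)]
    | succ m =>
      rw [dif_pos (by simp)]
      have : ∀ i' : Fin k, ((i' : ℕ) + 1 = ((⟨m + 1, hiv⟩ : Fin k) : ℕ))
          ↔ i' = ⟨m, by omega⟩ := by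
        intro i'; simp [Fin.ext_iff]
      rw [Finset.sum_congr rfl fun i' _ => if_congr (this i') rfl rfl,
        Finset.sum_ite_eq' univ (⟨m, by omega⟩ : Fin k) w]
      simp
end Lmat


lemma Kt_large {K t B : ℤ} (hK : K ≠ 0) (ht : t ∉ Finset.Icc (-B) B) :
    B < K * t ∨ K * t < -B := by
  simp only [Finset.mem_Icc, not_and_or, not_le] at ht
  have h1 : (1 : ℤ) ≤ |K| := Int.one_le_abs hK
  have h2 : |t| ≤ |K * t| := by
    rw [abs_mul]
    exact le_mul_of_one_le_left (abs_nonneg t) h1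
  rcases abs_cases t with ⟨he, _⟩ | ⟨he, _⟩ <;>
    rcases abs_cases (K * t) with ⟨he2, _⟩ | ⟨he2, _⟩ <;> omega

set_option maxHeartbeats 2000000 in
/-- the two determinant identities relating `ė` and `ë`
(with `t^{1/2}` replaced by `v`, `t = v²`), as identities in `ℚ(u,v,x₁,…,xₙ)`
(in which the Laurent polynomial ring `ℤ[u^{±1},v^{±1},x^{±1}]` embeds). -/
theorem determinant_identities_edot_eddot (n k : ℕ) (hn : 0 < n) (hk : 0 < k)
    (K : ℤ) (hK : K ≠ 0) :
    (2 * ∑ᶠ y : Fin k → ℤ,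
        Matrix.det (Matrix.of fun i j : Fin k =>
          XX (Sum.inl 0 : Fin 2 ⊕ Fin n) ^ y i *
            XX (Sum.inl 1 : Fin 2 ⊕ Fin n) ^
              (K * (y i) ^ 2 - (2 * (((j : ℕ) : ℤ) + 1) - 1) * y i) *
            (eDot (fun l : Fin n => XX (Sum.inr l))
                ((n : ℤ) - (((i : ℕ) : ℤ) + 1) + (((j : ℕ) : ℤ) + 1) - K * y i) +
              eDot (fun l : Fin n => XX (Sum.inr l))
                ((n : ℤ) + (((i : ℕ) : ℤ) + 1) + (((j : ℕ) : ℤ) + 1) - K * y i - 1))) =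
      ∑ᶠ y : Fin k → ℤ,
        Matrix.det (Matrix.of fun i j : Fin k =>
          XX (Sum.inl 0 : Fin 2 ⊕ Fin n) ^ y i *
            XX (Sum.inl 1 : Fin 2 ⊕ Fin n) ^
              (K * (y i) ^ 2 - (2 * (((j : ℕ) : ℤ) + 1) - 1) * y i) *
            (eDDot (fun l : Fin n => XX (Sum.inr l))
                ((n : ℤ) - (((i : ℕ) : ℤ) + 1) + (((j : ℕ) : ℤ) + 1) - K * y i + 1) +
              eDDot (fun l : Fin n => XX (Sum.inr l))
                ((n : ℤ) + (((i : ℕ) : ℤ) + 1) + (((j : ℕ) : ℤ) + 1) - K * y i - 1)))) ∧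
    (∑ᶠ y : Fin k → ℤ,
        Matrix.det (Matrix.of fun i j : Fin k =>
          XX (Sum.inl 0 : Fin 2 ⊕ Fin n) ^ y i *
            XX (Sum.inl 1 : Fin 2 ⊕ Fin n) ^
              (K * (y i) ^ 2 - 2 * (((j : ℕ) : ℤ) + 1) * y i) *
            (eDot (fun l : Fin n => XX (Sum.inr l))
                ((n : ℤ) - (((i : ℕ) : ℤ) + 1) + (((j : ℕ) : ℤ) + 1) - K * y i) -
              eDot (fun l : Fin n => XX (Sum.inr l))
                ((n : ℤ) + (((i : ℕ) : ℤ) + 1) + (((j : ℕ) : ℤ) + 1) - K * y i)) ) =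
      ∑ᶠ y : Fin k → ℤ,
        Matrix.det (Matrix.of fun i j : Fin k =>
          XX (Sum.inl 0 : Fin 2 ⊕ Fin n) ^ y i *
            XX (Sum.inl 1 : Fin 2 ⊕ Fin n) ^
              (K * (y i) ^ 2 - 2 * (((j : ℕ) : ℤ) + 1) * y i) *
            (eDDot (fun l : Fin n => XX (Sum.inr l))
                ((n : ℤ) - (((i : ℕ) : ℤ) + 1) + (((j : ℕ) : ℤ) + 1) - K * y i + 1) -
              eDDot (fun l : Fin n => XX (Sum.inr l))
                ((n : ℤ) + (((i : ℕ) : ℤ) + 1) + (((j : ℕ) : ℤ) + 1) - K * y i)))) := by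
  haveI : NeZero k := ⟨hk.ne'⟩
  constructor
  · have h := finsum_det_rel
      (fun (i : Fin k) (t : ℤ) (j : Fin k) =>
        XX (Sum.inl 0 : Fin 2 ⊕ Fin n) ^ t *
          XX (Sum.inl 1 : Fin 2 ⊕ Fin n) ^
            (K * t ^ 2 - (2 * (((j : ℕ) : ℤ) + 1) - 1) * t) *
          (eDot (fun l : Fin n => XX (Sum.inr l))
              ((n : ℤ) - (((i : ℕ) : ℤ) + 1) + (((j : ℕ) : ℤ) + 1) - K * t) +
            eDot (fun l : Fin n => XX (Sum.inr l))
              ((n : ℤ) + (((i : ℕ) : ℤ) + 1) + (((j : ℕ) : ℤ) + 1) - K * t - 1)))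
      (fun (i : Fin k) (t : ℤ) (j : Fin k) =>
        XX (Sum.inl 0 : Fin 2 ⊕ Fin n) ^ t *
          XX (Sum.inl 1 : Fin 2 ⊕ Fin n) ^
            (K * t ^ 2 - (2 * (((j : ℕ) : ℤ) + 1) - 1) * t) *
          (eDDot (fun l : Fin n => XX (Sum.inr l))
              ((n : ℤ) - (((i : ℕ) : ℤ) + 1) + (((j : ℕ) : ℤ) + 1) - K * t + 1) +
            eDDot (fun l : Fin n => XX (Sum.inr l))
              ((n : ℤ) + (((i : ℕ) : ℤ) + 1) + (((j : ℕ) : ℤ) + 1) - K * t - 1)))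
      (Lmat k (fun i => if i = 0 then (2 : FQ (Fin 2 ⊕ Fin n)) else 1))
      (Finset.Icc (-(4 * ((n : ℤ) + k + 1))) (4 * ((n : ℤ) + k + 1)))
      ?_ ?_
    · rw [Lmat_det, show (∏ i : Fin k, if i = 0 then (2 : FQ (Fin 2 ⊕ Fin n)) else 1) = 2
        by rw [Finset.prod_ite_eq']; simp] at h
      exact h.symm
    · intro i t ht
      have hKt := Kt_large hK ht
      have hi' : ((i : ℕ) : ℤ) < k := by exact_mod_cast i.isLt
      have hj' : ∀ j : Fin k, ((j : ℕ) : ℤ) < k := fun j => by exact_mod_cast j.isLt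
      funext j
      have hi0 : (0 : ℤ) ≤ ((i : ℕ) : ℤ) := Int.natCast_nonneg _
      have hj0 : (0 : ℤ) ≤ ((j : ℕ) : ℤ) := Int.natCast_nonneg _
      have hj'' := hj' j
      beta_reduce
      set m : ℤ := K * t with hm
      rw [eDot_eq_zero _ (by omega), eDot_eq_zero _ (by omega), add_zero, mul_zero,
        Pi.zero_apply]
    · intro i t
      rw [Lmat_sum]
      by_cases hi0 : i = 0
      · subst hi0
        rw [dif_neg (by simp), add_zero, if_pos rfl]
        funext j
        simp only [Pi.smul_apply, smul_eq_mul, Fin.val_zero, eDDot_eq]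
        ring_nf
      · have hpos : 0 < (i : ℕ) := Nat.pos_of_ne_zero fun h => hi0 (Fin.ext (by simp [h]))
        rw [dif_pos hpos, if_neg hi0]
        funext j
        have hc : (((i : ℕ) - 1 : ℕ) : ℤ) = ((i : ℕ) : ℤ) - 1 := by omega
        simp only [Pi.add_apply, Pi.smul_apply, smul_eq_mul, one_mul, Fin.val_mk, hc,
          eDDot_eq]
        ring_nf
  · have h := finsum_det_rel
      (fun (i : Fin k) (t : ℤ) (j : Fin k) =>
        XX (Sum.inl 0 : Fin 2 ⊕ Fin n) ^ t *
          XX (Sum.inl 1 : Fin 2 ⊕ Fin n) ^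
            (K * t ^ 2 - 2 * (((j : ℕ) : ℤ) + 1) * t) *
          (eDot (fun l : Fin n => XX (Sum.inr l))
              ((n : ℤ) - (((i : ℕ) : ℤ) + 1) + (((j : ℕ) : ℤ) + 1) - K * t) -
            eDot (fun l : Fin n => XX (Sum.inr l))
              ((n : ℤ) + (((i : ℕ) : ℤ) + 1) + (((j : ℕ) : ℤ) + 1) - K * t)))
      (fun (i : Fin k) (t : ℤ) (j : Fin k) =>
        XX (Sum.inl 0 : Fin 2 ⊕ Fin n) ^ t *
          XX (Sum.inl 1 : Fin 2 ⊕ Fin n) ^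
            (K * t ^ 2 - 2 * (((j : ℕ) : ℤ) + 1) * t) *
          (eDDot (fun l : Fin n => XX (Sum.inr l))
              ((n : ℤ) - (((i : ℕ) : ℤ) + 1) + (((j : ℕ) : ℤ) + 1) - K * t + 1) -
            eDDot (fun l : Fin n => XX (Sum.inr l))
              ((n : ℤ) + (((i : ℕ) : ℤ) + 1) + (((j : ℕ) : ℤ) + 1) - K * t)))
      (Lmat k (fun _ => (1 : FQ (Fin 2 ⊕ Fin n))))
      (Finset.Icc (-(4 * ((n : ℤ) + k + 1))) (4 * ((n : ℤ) + k + 1)))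
      ?_ ?_
    · rw [Lmat_det, Finset.prod_const_one, one_mul] at h
      exact h.symm
    · intro i t ht
      have hKt := Kt_large hK ht
      have hi' : ((i : ℕ) : ℤ) < k := by exact_mod_cast i.isLt
      have hj' : ∀ j : Fin k, ((j : ℕ) : ℤ) < k := fun j => by exact_mod_cast j.isLt
      funext j
      have hi0 : (0 : ℤ) ≤ ((i : ℕ) : ℤ) := Int.natCast_nonneg _
      have hj0 : (0 : ℤ) ≤ ((j : ℕ) : ℤ) := Int.natCast_nonneg _
      have hj'' := hj' j
      beta_reduce
      set m : ℤ := K * t with hm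
      rw [eDot_eq_zero _ (by omega), eDot_eq_zero _ (by omega), sub_zero,
        mul_zero, Pi.zero_apply]
    · intro i t
      rw [Lmat_sum]
      by_cases hi0 : i = 0
      · subst hi0
        rw [dif_neg (by simp), add_zero]
        funext j
        simp only [Pi.smul_apply, smul_eq_mul, one_mul, Fin.val_zero, eDDot_eq]
        ring_nf
      · have hpos : 0 < (i : ℕ) := Nat.pos_of_ne_zero fun h => hi0 (Fin.ext (by simp [h]))
        rw [dif_pos hpos]
        funext j
        have hc : (((i : ℕ) - 1 : ℕ) : ℤ) = ((i : ℕ) : ℤ) - 1 := by omega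
        simp only [Pi.add_apply, Pi.smul_apply, smul_eq_mul, one_mul, Fin.val_mk, hc,
          eDDot_eq]
        ring_nf
end

section
/- Let R be a commutative ring, k a positive integer, E : ℤ → R any function, z ∈ ℤ^k, w a permutation of {1,…,k}, and I a nonempty subset of {2,…,k}. For a permutation σ of {1,…,k} and integers i, j with 1 ≤ i ≤ k, define F_{i,j}(σ) := E(z_{w(σ(i))} + j − σ(i)) + E(z_{w(σ(i))} − j − σ(i) + 1) and F̃_{i,j}(σ) := E(z_{w(σ(i))} + j − σ(i)) − E(z_{w(σ(i))} − j − σ(i)). Then Σ_{σ ∈ S_k} sgn(σ) · ( ∏_{i ∈ I} F_{i,i−1}(σ) ) · ( ∏_{i ∈ {1,…,k}∖I} F_{i,i}(σ) ) = 0, and likewise Σ_{σ ∈ S_k} sgn(σ) · ( ∏_{i ∈ I} F̃_{i,i−1}(σ) ) · ( ∏_{i ∈ {1,…,k}∖I} F̃_{i,i}(σ) ) = 0. -/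
open Finset

lemma aux_vanish {R : Type*} [CommRing R] {k : ℕ} (u : Fin k → ℤ → R)
    (I : Finset (Fin k)) (hI : I.Nonempty) (hI0 : ∀ i ∈ I, (i : ℕ) ≠ 0) :
    ∑ σ : Equiv.Perm (Fin k),
      ((Equiv.Perm.sign σ : ℤ) : R) *
        ((∏ i ∈ I, u (σ i) ((i : ℕ) : ℤ)) * ∏ i ∈ Iᶜ, u (σ i) (((i : ℕ) : ℤ) + 1)) = 0 := by
  classical
  set M : Matrix (Fin k) (Fin k) R :=
    fun c i => if i ∈ I then u c ((i : ℕ) : ℤ) else u c (((i : ℕ) : ℤ) + 1) with hM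
  have hdet : M.det = ∑ σ : Equiv.Perm (Fin k),
      ((Equiv.Perm.sign σ : ℤ) : R) *
        ((∏ i ∈ I, u (σ i) ((i : ℕ) : ℤ)) * ∏ i ∈ Iᶜ, u (σ i) (((i : ℕ) : ℤ) + 1)) := by
    rw [Matrix.det_apply']
    refine Finset.sum_congr rfl fun σ _ => ?_
    congr 1
    rw [← Finset.prod_mul_prod_compl I]
    congr 1
    · exact Finset.prod_congr rfl fun i hi => by simp [hM, hi]
    · refine Finset.prod_congr rfl fun i hi => by
        simp only [Finset.mem_compl] at hi
        simp [hM, hi]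
  rw [← hdet]
  -- two equal columns
  set i₀ : Fin k := I.min' hI with hi₀
  have hmem : i₀ ∈ I := I.min'_mem hI
  have hm0 : (i₀ : ℕ) ≠ 0 := hI0 _ hmem
  have hlt : (i₀ : ℕ) - 1 < k := lt_of_le_of_lt (Nat.sub_le _ _) i₀.isLt
  set i₁ : Fin k := ⟨(i₀ : ℕ) - 1, hlt⟩ with hi₁
  have hne : i₀ ≠ i₁ := by
    intro h
    have : (i₀ : ℕ) = (i₀ : ℕ) - 1 := congrArg Fin.val h
    omega
  have hnotmem : i₁ ∉ I := by
    intro h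
    have := I.min'_le _ h
    rw [← hi₀] at this
    have : (i₀ : ℕ) ≤ (i₀ : ℕ) - 1 := this
    omega
  refine Matrix.det_zero_of_column_eq hne fun c => ?_
  simp only [hM, hmem, hnotmem, if_true, if_false, hi₁]
  rw [if_neg (show (⟨(i₀ : ℕ) - 1, hlt⟩ : Fin k) ∉ I from hnotmem)]
  congr 1
  push_cast [Nat.cast_sub (Nat.one_le_iff_ne_zero.mpr hm0)]
  ring

/-- the key alternating-sum vanishing result behind the determinant
identities. Indices are one-based in the mathematical statement; here `i : Fin k`
corresponds to the one-based index `i+1`, so `I ⊆ {2,…,k}` becomes `(i : ℕ) ≠ 0`,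
`F_{i,i−1}` uses `j = (i:ℤ)` and `F_{i,i}` uses `j = (i:ℤ)+1`. -/
theorem alternating_sum_vanishing {R : Type*} [CommRing R] (k : ℕ) (hk : 0 < k)
    (E : ℤ → R) (z : Fin k → ℤ) (w : Equiv.Perm (Fin k)) (I : Finset (Fin k))
    (hI : I.Nonempty) (hI0 : ∀ i ∈ I, (i : ℕ) ≠ 0) :
    (∑ σ : Equiv.Perm (Fin k),
        ((Equiv.Perm.sign σ : ℤ) : R) *
          ((∏ i ∈ I,
              (E (z (w (σ i)) + ((i : ℕ) : ℤ) - (((σ i : ℕ) : ℤ) + 1)) +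
                E (z (w (σ i)) - ((i : ℕ) : ℤ) - (((σ i : ℕ) : ℤ) + 1) + 1))) *
            ∏ i ∈ Iᶜ,
              (E (z (w (σ i)) + (((i : ℕ) : ℤ) + 1) - (((σ i : ℕ) : ℤ) + 1)) +
                E (z (w (σ i)) - (((i : ℕ) : ℤ) + 1) - (((σ i : ℕ) : ℤ) + 1) + 1))) = 0) ∧
    (∑ σ : Equiv.Perm (Fin k),
        ((Equiv.Perm.sign σ : ℤ) : R) *
          ((∏ i ∈ I,
              (E (z (w (σ i)) + ((i : ℕ) : ℤ) - (((σ i : ℕ) : ℤ) + 1)) -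
                E (z (w (σ i)) - ((i : ℕ) : ℤ) - (((σ i : ℕ) : ℤ) + 1)))) *
            ∏ i ∈ Iᶜ,
              (E (z (w (σ i)) + (((i : ℕ) : ℤ) + 1) - (((σ i : ℕ) : ℤ) + 1)) -
                E (z (w (σ i)) - (((i : ℕ) : ℤ) + 1) - (((σ i : ℕ) : ℤ) + 1)))) = 0) := by
  constructor
  · exact aux_vanish (fun c j => E (z (w c) + j - (((c : ℕ) : ℤ) + 1)) +
      E (z (w c) - j - (((c : ℕ) : ℤ) + 1) + 1)) I hI hI0
  · exact aux_vanish (fun c j => E (z (w c) + j - (((c : ℕ) : ℤ) + 1)) -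
      E (z (w c) - j - (((c : ℕ) : ℤ) + 1))) I hI hI0
end
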